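/- Let 𝓕 be a finite system of nonempty subsets of [n] and G = KG(𝓕) its Kneser graph. (a) The map sending each vertex B′ ⊎ B″ of B_S(𝓕) to {F ∈ 𝓕 : F ⊆ B′} ⊎ {F ∈ 𝓕 : F ⊆ B″} (a nonempty simplex of B₀(G)) is a simplicial ℤ₂-map B_S(𝓕) → sd B₀(G). (b) The map sending each vertex A′ ⊎ A″ of sd B₀(G) (a nonempty simplex of B₀(G)) to (⋃A′) ⊎ (⋃A″) is a simplicial ℤ₂-map sd B₀(G) → B_S(𝓕). -/

import Mathlib

open Finset

attribute [local instance] Classical.propDecidable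

noncomputable section

variable {V : Type*}

/-- The set `CN(A)` of common neighbors of `A` in `G` (so `CN(∅) = V`). -/
def CN [Fintype V] (G : SimpleGraph V) (A : Finset V) : Finset V :=
  Finset.univ.filter fun v => ∀ a ∈ A, G.Adj a v

/-- The shore of `S ⊆ V × {1,2}` lying over `b` (with `false` for the first copy of `V`
and `true` for the second). -/
def shore (S : Finset (V × Bool)) (b : Bool) : Finset V :=
  (S.filter fun p => p.2 = b).image Prod.fst

/-- `A' ⊎ A'' := (A' × {1}) ∪ (A'' × {2})`, with `false` for `1` and `true` for `2`. -/
def joinPair (A' A'' : Finset V) : Finset (V × Bool) :=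
  A'.image (fun v => (v, false)) ∪ A''.image (fun v => (v, true))

/-- The ℤ₂-action on subsets of `V × {1,2}`: interchange the two copies of `V`,
i.e. `A' ⊎ A'' ↦ A'' ⊎ A'`. -/
def swapFinset (S : Finset (V × Bool)) : Finset (V × Bool) :=
  S.image fun p => (p.1, !p.2)

/-- `G[A', A'']` is complete: every vertex of `A'` is adjacent to every vertex of `A''`. -/
def IsCompleteBip (G : SimpleGraph V) (A' A'' : Finset V) : Prop :=
  ∀ a ∈ A', ∀ b ∈ A'', G.Adj a b

/-- Simplices of the box complex `B(G)`: sets `A' ⊎ A''` with `A'`, `A''` disjoint,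
`G[A', A'']` complete and `CN(A') ≠ ∅ ≠ CN(A'')`. -/
def BoxSimplex [Fintype V] (G : SimpleGraph V) (S : Finset (V × Bool)) : Prop :=
  Disjoint (shore S false) (shore S true) ∧
  IsCompleteBip G (shore S false) (shore S true) ∧
  (CN G (shore S false)).Nonempty ∧ (CN G (shore S true)).Nonempty

/-- Simplices of the box complex `B₀(G)`: sets `A' ⊎ A''` with `A'`, `A''` disjoint and
`G[A', A'']` complete. -/
def Box0Simplex (G : SimpleGraph V) (S : Finset (V × Bool)) : Prop :=
  Disjoint (shore S false) (shore S true) ∧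
  IsCompleteBip G (shore S false) (shore S true)

/-- Vertices of `B₁(G)`: sets `A' ⊎ A''` with `A'`, `A''` nonempty, disjoint and
`G[A', A'']` complete. -/
def B1Vertex (G : SimpleGraph V) (S : Finset (V × Bool)) : Prop :=
  (shore S false).Nonempty ∧ (shore S true).Nonempty ∧
  Disjoint (shore S false) (shore S true) ∧
  IsCompleteBip G (shore S false) (shore S true)

/-- Simplices of the order complex `B₁(G)`: chains of vertices of `B₁(G)` under inclusion. -/
def B1Simplex (G : SimpleGraph V) (C : Finset (Finset (V × Bool))) : Prop :=
  (∀ T ∈ C, B1Vertex G T) ∧ IsChain (· ⊆ ·) (C : Set (Finset (V × Bool)))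

/-- Simplices of the barycentric subdivision `sd K` of the complex `K` whose simplices are
given by the predicate `P`: chains of nonempty simplices of `K` under inclusion. -/
def sdSimplex {γ : Type*} (P : Finset γ → Prop) (C : Finset (Finset γ)) : Prop :=
  (∀ S ∈ C, P S ∧ S.Nonempty) ∧ IsChain (· ⊆ ·) (C : Set (Finset γ))

/-- The Kneser graph of a set system `𝓕`: the vertices are the members of `𝓕`,
and two (distinct) members are adjacent if and only if they are disjoint. -/
def KG {α : Type*} (𝓕 : Finset (Finset α)) : SimpleGraph {F // F ∈ 𝓕} where
  Adj A B := A ≠ B ∧ Disjoint A.1 B.1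
  symm := ⟨fun A B h => ⟨h.1.symm, h.2.symm⟩⟩
  loopless := ⟨fun A h => h.1 rfl⟩

/-- Vertices of `B_S(𝓕)` (Sarkaria's complex): sets `B' ⊎ B''` with `B', B'' ⊆ [n]`
disjoint such that at least one of `B'`, `B''` contains a member of `𝓕`. -/
def BSVertex (n : ℕ) (𝓕 : Finset (Finset ℕ)) (T : Finset (ℕ × Bool)) : Prop :=
  shore T false ⊆ Finset.Icc 1 n ∧ shore T true ⊆ Finset.Icc 1 n ∧
  Disjoint (shore T false) (shore T true) ∧
  ((∃ F ∈ 𝓕, F ⊆ shore T false) ∨ (∃ F ∈ 𝓕, F ⊆ shore T true))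

/-- Simplices of the order complex `B_S(𝓕)`: chains of its vertices under inclusion. -/
def BSSimplex (n : ℕ) (𝓕 : Finset (Finset ℕ)) (C : Finset (Finset (ℕ × Bool))) : Prop :=
  (∀ T ∈ C, BSVertex n 𝓕 T) ∧ IsChain (· ⊆ ·) (C : Set (Finset (ℕ × Bool)))

/-- The map `B' ⊎ B'' ↦ {F ∈ 𝓕 : F ⊆ B'} ⊎ {F ∈ 𝓕 : F ⊆ B''}`. -/
def toKneserSide (𝓕 : Finset (Finset ℕ)) (T : Finset (ℕ × Bool)) :
    Finset ({F // F ∈ 𝓕} × Bool) :=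
  joinPair (Finset.univ.filter fun F : {F // F ∈ 𝓕} => F.1 ⊆ shore T false)
           (Finset.univ.filter fun F : {F // F ∈ 𝓕} => F.1 ⊆ shore T true)

/-- The map `A' ⊎ A'' ↦ (⋃ A') ⊎ (⋃ A'')`. -/
def toGroundSide (𝓕 : Finset (Finset ℕ)) (T : Finset ({F // F ∈ 𝓕} × Bool)) :
    Finset (ℕ × Bool) :=
  joinPair ((shore T false).sup fun F => F.1) ((shore T true).sup fun F => F.1)

lemma mem_shore {S : Finset (V × Bool)} {x : V} {b : Bool} :
    x ∈ shore S b ↔ (x, b) ∈ S := by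
  simp only [shore, Finset.mem_image, Finset.mem_filter]
  constructor
  · rintro ⟨⟨p1, p2⟩, ⟨hp, rfl⟩, rfl⟩; exact hp
  · intro h; exact ⟨(x, b), ⟨h, rfl⟩, rfl⟩

lemma shore_joinPair (A B : Finset V) (b : Bool) :
    shore (joinPair A B) b = if b then B else A := by
  ext x
  cases b <;> simp [mem_shore, joinPair]

lemma shore_swap (S : Finset (V × Bool)) (b : Bool) :
    shore (swapFinset S) b = shore S (!b) := by
  ext x
  simp only [mem_shore, swapFinset, Finset.mem_image]
  constructor
  · rintro ⟨⟨p1, p2⟩, hp, h⟩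
    obtain ⟨rfl, h2⟩ := Prod.ext_iff.1 h
    subst h2
    simpa using hp
  · intro h; exact ⟨(x, !b), h, by simp⟩

lemma swap_joinPair (A B : Finset V) :
    swapFinset (joinPair A B) = joinPair B A := by
  ext ⟨x, b⟩
  simp only [swapFinset, Finset.mem_image, joinPair, Finset.mem_union]
  constructor
  · rintro ⟨⟨p1, p2⟩, hp, h⟩
    obtain ⟨rfl, rfl⟩ := Prod.ext_iff.1 h
    cases p2 <;> simp_all
  · intro h
    cases b
    · exact ⟨(x, true), by simp_all⟩
    · exact ⟨(x, false), by simp_all⟩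

lemma shore_mono {S S' : Finset (V × Bool)} (h : S ⊆ S') (b : Bool) :
    shore S b ⊆ shore S' b := fun x hx => mem_shore.2 (h (mem_shore.1 hx))

lemma joinPair_mono {A A' B B' : Finset V} (hA : A ⊆ A') (hB : B ⊆ B') :
    joinPair A B ⊆ joinPair A' B' := by
  intro ⟨x, b⟩ hx
  simp only [joinPair, Finset.mem_union, Finset.mem_image] at hx ⊢
  rcases hx with ⟨v, hv, h⟩ | ⟨v, hv, h⟩
  · exact Or.inl ⟨v, hA hv, h⟩
  · exact Or.inr ⟨v, hB hv, h⟩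

/-- For `G = KG(𝓕)`: (a) `B' ⊎ B'' ↦ {F ∈ 𝓕 : F ⊆ B'} ⊎ {F ∈ 𝓕 : F ⊆ B''}` is a
simplicial ℤ₂-map `B_S(𝓕) → sd B₀(G)`; (b) `A' ⊎ A'' ↦ (⋃A') ⊎ (⋃A'')` is a simplicial
ℤ₂-map `sd B₀(G) → B_S(𝓕)`. -/
theorem BS_iso_sd_B0_kneser (n : ℕ) (𝓕 : Finset (Finset ℕ))
    (h𝓕 : ∀ F ∈ 𝓕, F ⊆ Finset.Icc 1 n ∧ F.Nonempty) :
    -- (a)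
    ((∀ C : Finset (Finset (ℕ × Bool)), BSSimplex n 𝓕 C →
        sdSimplex (Box0Simplex (KG 𝓕)) (C.image (toKneserSide 𝓕))) ∧
      (∀ T : Finset (ℕ × Bool), BSVertex n 𝓕 T →
        toKneserSide 𝓕 (swapFinset T) = swapFinset (toKneserSide 𝓕 T))) ∧
    -- (b)
    ((∀ C : Finset (Finset ({F // F ∈ 𝓕} × Bool)), sdSimplex (Box0Simplex (KG 𝓕)) C →
        BSSimplex n 𝓕 (C.image (toGroundSide 𝓕))) ∧
      (∀ T : Finset ({F // F ∈ 𝓕} × Bool), Box0Simplex (KG 𝓕) T → T.Nonempty →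
        toGroundSide 𝓕 (swapFinset T) = swapFinset (toGroundSide 𝓕 T))) := by
  constructor
  · constructor
    · -- (a) simplicial
      rintro C ⟨hvert, hchain⟩
      refine ⟨?_, ?_⟩
      · rintro S hS
        simp only [Finset.mem_image] at hS
        obtain ⟨T, hT, rfl⟩ := hS
        obtain ⟨hB1, hB2, hdisj, hex⟩ := hvert T hT
        have hsf : shore (toKneserSide 𝓕 T) false
            = Finset.univ.filter fun F : {F // F ∈ 𝓕} => F.1 ⊆ shore T false := by
          simp [toKneserSide, shore_joinPair]
        have hst : shore (toKneserSide 𝓕 T) true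
            = Finset.univ.filter fun F : {F // F ∈ 𝓕} => F.1 ⊆ shore T true := by
          simp [toKneserSide, shore_joinPair]
        refine ⟨⟨?_, ?_⟩, ?_⟩
        · rw [hsf, hst]
          rw [Finset.disjoint_left]
          intro F hF hF'
          simp only [Finset.mem_filter] at hF hF'
          have hne := (h𝓕 F.1 F.2).2
          obtain ⟨x, hx⟩ := hne
          exact (Finset.disjoint_left.1 hdisj (hF.2 hx)) (hF'.2 hx)
        · rw [hsf, hst]
          intro F hF G hG
          simp only [Finset.mem_filter] at hF hG
          have hFG : Disjoint F.1 G.1 :=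
            Finset.disjoint_left.2 fun x hxF hxG =>
              (Finset.disjoint_left.1 hdisj (hF.2 hxF)) (hG.2 hxG)
          refine ⟨fun h => ?_, hFG⟩
          · subst h
            obtain ⟨x, hx⟩ := (h𝓕 F.1 F.2).2
            exact (Finset.disjoint_left.1 hFG hx) hx
        · rcases hex with ⟨F, hF, hFs⟩ | ⟨F, hF, hFs⟩
          · exact ⟨(⟨F, hF⟩, false), by
              simp [toKneserSide, joinPair, Finset.mem_union, hFs]⟩
          · exact ⟨(⟨F, hF⟩, true), by
              simp [toKneserSide, joinPair, Finset.mem_union, hFs]⟩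
      · -- chain
        intro S hS S' hS' _
        simp only [Finset.coe_image, Set.mem_image, Finset.mem_coe] at hS hS'
        obtain ⟨T, hT, rfl⟩ := hS
        obtain ⟨T', hT', rfl⟩ := hS'
        rcases eq_or_ne T T' with rfl | hne
        · exact Or.inl subset_rfl
        have := hchain hT hT' hne
        have mono : ∀ {U U' : Finset (ℕ × Bool)}, U ⊆ U' →
            toKneserSide 𝓕 U ⊆ toKneserSide 𝓕 U' := by
          intro U U' hUU
          refine joinPair_mono ?_ ?_ <;>
          · intro F hF
            simp only [Finset.mem_filter, Finset.mem_univ, true_and] at hF ⊢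
            exact hF.trans (shore_mono hUU _)
        rcases this with h | h
        · exact Or.inl (mono h)
        · exact Or.inr (mono h)
    · -- (a) equivariance
      intro T _
      simp only [toKneserSide, shore_swap, Bool.not_false, Bool.not_true]
      rw [swap_joinPair]
  · constructor
    · -- (b) simplicial
      rintro C ⟨hsimp, hchain⟩
      refine ⟨?_, ?_⟩
      · rintro S hS
        simp only [Finset.mem_image] at hS
        obtain ⟨T, hT, rfl⟩ := hS
        obtain ⟨⟨hdisj, hcomp⟩, hne⟩ := hsimp T hT
        have hsf : shore (toGroundSide 𝓕 T) false = (shore T false).sup fun F => F.1 := by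
          simp [toGroundSide, shore_joinPair]
        have hst : shore (toGroundSide 𝓕 T) true = (shore T true).sup fun F => F.1 := by
          simp [toGroundSide, shore_joinPair]
        refine ⟨?_, ?_, ?_, ?_⟩
        · rw [hsf]
          refine Finset.sup_le fun (F : {F // F ∈ 𝓕}) _ => (h𝓕 F.1 F.2).1
        · rw [hst]
          refine Finset.sup_le fun (F : {F // F ∈ 𝓕}) _ => (h𝓕 F.1 F.2).1
        · rw [hsf, hst, Finset.disjoint_left]
          intro x hx hx'
          simp only [Finset.mem_sup] at hx hx'
          obtain ⟨F, hF, hxF⟩ := hx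
          obtain ⟨G, hG, hxG⟩ := hx'
          rcases eq_or_ne F G with rfl | hFG
          · exact (Finset.disjoint_left.1 hdisj hF) hG
          · exact Finset.disjoint_left.1 (hcomp F hF G hG).2 hxF hxG
        · obtain ⟨⟨F, b⟩, hFb⟩ := hne
          have hFb' : F ∈ shore T b := mem_shore.2 hFb
          have hsub : F.1 ⊆ (shore T b).sup fun F => F.1 :=
            Finset.le_sup (f := fun F : {F // F ∈ 𝓕} => F.1) hFb'
          cases b
          · exact Or.inl ⟨F.1, F.2, hsf ▸ hsub⟩
          · exact Or.inr ⟨F.1, F.2, hst ▸ hsub⟩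
      · intro S hS S' hS' _
        simp only [Finset.coe_image, Set.mem_image, Finset.mem_coe] at hS hS'
        obtain ⟨T, hT, rfl⟩ := hS
        obtain ⟨T', hT', rfl⟩ := hS'
        rcases eq_or_ne T T' with rfl | hne
        · exact Or.inl subset_rfl
        have mono : ∀ {U U' : Finset ({F // F ∈ 𝓕} × Bool)}, U ⊆ U' →
            toGroundSide 𝓕 U ⊆ toGroundSide 𝓕 U' := by
          intro U U' hUU
          exact joinPair_mono (Finset.sup_mono (shore_mono hUU _))
            (Finset.sup_mono (shore_mono hUU _))
        rcases hchain hT hT' hne with h | h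
        · exact Or.inl (mono h)
        · exact Or.inr (mono h)
    · -- (b) equivariance
      intro T _ _
      simp only [toGroundSide, shore_swap, Bool.not_false, Bool.not_true]
      rw [swap_joinPair]
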